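/- Let f(x) = sin(x)(1 - 1/(8 sin(x/2)^3)) and θ_c its unique critical point in (0, π). Let C = {x₁, ..., x_m} with all xᵢ > 0 and x₁ + ... + x_m ≤ 2π. Let A₁, A₂, B₁, B₂ be nonempty subsets of C with A₁ ∪ A₂ = B₁ ∪ B₂ = C (as disjoint unions/partitions) and B₁ ⊊ A₁. If f(Σ_{A₁} xᵢ) = f(Σ_{A₂} xᵢ) and f(Σ_{B₁} xᵢ) = f(Σ_{B₂} xᵢ), then Σ_{C} xᵢ > 2θ_c > 6π/5, and exactly one of the following holds: Σ_{A₁} xᵢ = Σ_{A₂} xᵢ, or Σ_{B₁} xᵢ = Σ_{B₂} xᵢ, or Σ_{A₁} xᵢ = Σ_{B₂} xᵢ. -/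

import Mathlib

open Real Set

noncomputable def f (x : ℝ) : ℝ := Real.sin x * (1 - 1 / (8 * (Real.sin (x/2))^3))

noncomputable def f1 (x : ℝ) : ℝ :=
  Real.cos x + (2 - (Real.sin (x/2))^2) / (8 * (Real.sin (x/2))^3)
noncomputable def f2 (x : ℝ) : ℝ :=
  Real.cos (x/2) * ((Real.sin (x/2))^2 - 32*(Real.sin (x/2))^5 - 6) / (16 * (Real.sin (x/2))^4)
noncomputable def f3 (x : ℝ) : ℝ :=
  -Real.cos x + (5 + 18*(Real.cos (x/2))^2 + (Real.cos (x/2))^4) / (32 * (Real.sin (x/2))^5)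

lemma hd1 {x : ℝ} (hx : x ∈ Ioo (0:ℝ) (2*π)) : HasDerivAt f (f1 x) x := by
  have hs : 0 < Real.sin (x/2) := by
    apply Real.sin_pos_of_pos_of_lt_pi <;> [linarith [hx.1]; linarith [hx.2, Real.pi_pos]]
  have hsne : Real.sin (x/2) ≠ 0 := hs.ne'
  have h2 : HasDerivAt (fun y : ℝ => Real.sin (y/2)) (Real.cos (x/2) * (1/2)) x :=
    by exact (Real.hasDerivAt_sin (x/2)).comp x ((hasDerivAt_id x).div_const 2)
  have h3 : HasDerivAt (fun y : ℝ => 8 * (Real.sin (y/2))^3)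
      (8 * (3 * (Real.sin (x/2))^2 * (Real.cos (x/2) * (1/2)))) x := by
    simpa using ((h2.pow 3).const_mul 8)
  have h4 : HasDerivAt (fun y : ℝ => 1 / (8 * (Real.sin (y/2))^3))
      (-(8 * (3 * (Real.sin (x/2))^2 * (Real.cos (x/2) * (1/2)))) / (8 * (Real.sin (x/2))^3)^2) x := by
    exact ((hasDerivAt_const x (1:ℝ)).div h3 (by positivity)).congr_deriv (by ring)
  have h5 : HasDerivAt f
      (Real.cos x * (1 - 1 / (8 * (Real.sin (x/2))^3)) +
        Real.sin x * (0 - -(8 * (3 * (Real.sin (x/2))^2 * (Real.cos (x/2) * (1/2)))) / (8 * (Real.sin (x/2))^3)^2)) x := by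
    exact (Real.hasDerivAt_sin x).mul ((hasDerivAt_const x (1:ℝ)).sub h4)
  convert h5 using 1
  have hsin : Real.sin x = 2 * Real.sin (x/2) * Real.cos (x/2) := by
    have := Real.sin_two_mul (x/2); rw [show 2*(x/2) = x by ring] at this; linarith
  have hcos : Real.cos x = 1 - 2 * Real.sin (x/2)^2 := by
    have := Real.cos_two_mul (x/2); rw [show 2*(x/2) = x by ring] at this
    nlinarith [Real.sin_sq_add_cos_sq (x/2)]
  have hpy := Real.sin_sq_add_cos_sq (x/2)
  rw [f1, hsin, hcos]
  set s := Real.sin (x/2); set c := Real.cos (x/2)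
  field_simp
  linear_combination (-3) * hpy

lemma hd2 {x : ℝ} (hx : x ∈ Ioo (0:ℝ) (2*π)) : HasDerivAt f1 (f2 x) x := by
  have hs : 0 < Real.sin (x/2) := by
    apply Real.sin_pos_of_pos_of_lt_pi <;> [linarith [hx.1]; linarith [hx.2, Real.pi_pos]]
  have h2 : HasDerivAt (fun y : ℝ => Real.sin (y/2)) (Real.cos (x/2) * (1/2)) x :=
    by exact (Real.hasDerivAt_sin (x/2)).comp x ((hasDerivAt_id x).div_const 2)
  have hN : HasDerivAt (fun y : ℝ => 2 - (Real.sin (y/2))^2)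
      (0 - 2 * Real.sin (x/2) ^ 1 * (Real.cos (x/2) * (1/2))) x :=
    (hasDerivAt_const x (2:ℝ)).sub (h2.pow 2)
  have hD : HasDerivAt (fun y : ℝ => 8 * (Real.sin (y/2))^3)
      (8 * (3 * (Real.sin (x/2))^2 * (Real.cos (x/2) * (1/2)))) x := by
    simpa using ((h2.pow 3).const_mul 8)
  have h5 : HasDerivAt f1 (-Real.sin x +
      ((0 - 2 * Real.sin (x/2) ^ 1 * (Real.cos (x/2) * (1/2))) * (8 * (Real.sin (x/2))^3)
        - (2 - (Real.sin (x/2))^2) * (8 * (3 * (Real.sin (x/2))^2 * (Real.cos (x/2) * (1/2)))))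
        / (8 * (Real.sin (x/2))^3)^2) x := by
    exact (Real.hasDerivAt_cos x).add (hN.div hD (by positivity))
  convert h5 using 1
  have hsin : Real.sin x = 2 * Real.sin (x/2) * Real.cos (x/2) := by
    have := Real.sin_two_mul (x/2); rw [show 2*(x/2) = x by ring] at this; linarith
  have hpy := Real.sin_sq_add_cos_sq (x/2)
  rw [f2, hsin]
  set s := Real.sin (x/2); set c := Real.cos (x/2)
  field_simp
  linear_combination (0 : ℝ) * hpy

lemma hd3 {x : ℝ} (hx : x ∈ Ioo (0:ℝ) (2*π)) : HasDerivAt f2 (f3 x) x := by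
  have hs : 0 < Real.sin (x/2) := by
    apply Real.sin_pos_of_pos_of_lt_pi <;> [linarith [hx.1]; linarith [hx.2, Real.pi_pos]]
  have h2 : HasDerivAt (fun y : ℝ => Real.sin (y/2)) (Real.cos (x/2) * (1/2)) x :=
    by exact (Real.hasDerivAt_sin (x/2)).comp x ((hasDerivAt_id x).div_const 2)
  have hc2 : HasDerivAt (fun y : ℝ => Real.cos (y/2)) (-Real.sin (x/2) * (1/2)) x :=
    by exact (Real.hasDerivAt_cos (x/2)).comp x ((hasDerivAt_id x).div_const 2)
  have hin : HasDerivAt (fun y : ℝ => (Real.sin (y/2))^2 - 32*(Real.sin (y/2))^5 - 6)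
      (2 * Real.sin (x/2) ^ 1 * (Real.cos (x/2) * (1/2))
        - 32 * (5 * Real.sin (x/2) ^ 4 * (Real.cos (x/2) * (1/2)))) x := by
    simpa using (((h2.pow 2).sub ((h2.pow 5).const_mul 32)).sub_const 6)
  have hN : HasDerivAt (fun y : ℝ => Real.cos (y/2) * ((Real.sin (y/2))^2 - 32*(Real.sin (y/2))^5 - 6))
      (-Real.sin (x/2) * (1/2) * ((Real.sin (x/2))^2 - 32*(Real.sin (x/2))^5 - 6)
        + Real.cos (x/2) * (2 * Real.sin (x/2) ^ 1 * (Real.cos (x/2) * (1/2))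
            - 32 * (5 * Real.sin (x/2) ^ 4 * (Real.cos (x/2) * (1/2))))) x := hc2.mul hin
  have hD : HasDerivAt (fun y : ℝ => 16 * (Real.sin (y/2))^4)
      (16 * (4 * (Real.sin (x/2))^3 * (Real.cos (x/2) * (1/2)))) x := by
    simpa using ((h2.pow 4).const_mul 16)
  have h5 : HasDerivAt f2
      ((( -Real.sin (x/2) * (1/2) * ((Real.sin (x/2))^2 - 32*(Real.sin (x/2))^5 - 6)
        + Real.cos (x/2) * (2 * Real.sin (x/2) ^ 1 * (Real.cos (x/2) * (1/2))
            - 32 * (5 * Real.sin (x/2) ^ 4 * (Real.cos (x/2) * (1/2))))) * (16 * (Real.sin (x/2))^4)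
        - Real.cos (x/2) * ((Real.sin (x/2))^2 - 32*(Real.sin (x/2))^5 - 6)
            * (16 * (4 * (Real.sin (x/2))^3 * (Real.cos (x/2) * (1/2)))))
        / (16 * (Real.sin (x/2))^4)^2) x := hN.div hD (by positivity)
  convert h5 using 1
  have hcos : Real.cos x = 1 - 2 * Real.sin (x/2)^2 := by
    have := Real.cos_two_mul (x/2); rw [show 2*(x/2) = x by ring] at this
    nlinarith [Real.sin_sq_add_cos_sq (x/2)]
  have hpy := Real.sin_sq_add_cos_sq (x/2)
  rw [f3, hcos]
  set s := Real.sin (x/2); set c := Real.cos (x/2)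
  field_simp
  linear_combination (32*(s^2 + c^2 - 5) + 1024*s^5) * hpy

lemma f3pos {x : ℝ} (hx : x ∈ Ioo (0:ℝ) (2*π)) : 0 < f3 x := by
  have hs : 0 < Real.sin (x/2) := by
    apply Real.sin_pos_of_pos_of_lt_pi <;> [linarith [hx.1]; linarith [hx.2, Real.pi_pos]]
  have hs1 : Real.sin (x/2) ≤ 1 := Real.sin_le_one _
  have hpy := Real.sin_sq_add_cos_sq (x/2)
  have hcos : Real.cos x = 1 - 2 * Real.sin (x/2)^2 := by
    have := Real.cos_two_mul (x/2); rw [show 2*(x/2) = x by ring] at this; nlinarith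
  set s := Real.sin (x/2); set c := Real.cos (x/2)
  have hval : f3 x = (24 - 20*s^2 + s^4 - 32*s^5 + 64*s^7) / (32*s^5) := by
    rw [f3, hcos]
    change -(1 - 2*s^2) + (5 + 18*c^2 + c^4)/(32*s^5) = _
    field_simp
    linear_combination (c^2 - s^2 + 19) * hpy
  rw [hval]
  apply div_pos _ (by positivity)
  nlinarith [mul_nonneg (pow_nonneg hs.le 3) (sq_nonneg (8*s^2 - 2)), pow_pos hs 4,
    pow_pos hs 3, sq_nonneg s, mul_pos hs hs]

lemma f2neg {x : ℝ} (hx : x ∈ Ioo (0:ℝ) π) : f2 x < 0 := by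
  have hs : 0 < Real.sin (x/2) := by
    apply Real.sin_pos_of_pos_of_lt_pi <;> [linarith [hx.1]; linarith [hx.2, Real.pi_pos]]
  have hs1 : Real.sin (x/2) ≤ 1 := Real.sin_le_one _
  have hc : 0 < Real.cos (x/2) := by
    apply Real.cos_pos_of_mem_Ioo
    constructor <;> [linarith [hx.1, Real.pi_pos]; linarith [hx.2]]
  rw [f2]
  apply div_neg_of_neg_of_pos _ (by positivity)
  apply mul_neg_of_pos_of_neg hc
  nlinarith [pow_pos hs 5, pow_le_one₀ hs.le hs1 (n := 2)]

lemma f2mono : StrictMonoOn f2 (Ioo (0:ℝ) (2*π)) := by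
  apply strictMonoOn_of_deriv_pos (convex_Ioo _ _)
  · exact fun x hx => (hd3 hx).continuousAt.continuousWithinAt
  · intro x hx
    rw [interior_Ioo] at hx
    rw [(hd3 hx).deriv]
    exact f3pos hx

lemma f1anti : StrictAntiOn f1 (Ioo (0:ℝ) π) := by
  apply strictAntiOn_of_deriv_neg (convex_Ioo _ _)
  · intro x hx
    have : x ∈ Ioo (0:ℝ) (2*π) := ⟨hx.1, by linarith [hx.2, Real.pi_pos]⟩
    exact (hd2 this).continuousAt.continuousWithinAt
  · intro x hx
    rw [interior_Ioo] at hx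
    have hx2 : x ∈ Ioo (0:ℝ) (2*π) := ⟨hx.1, by linarith [hx.2, Real.pi_pos]⟩
    rw [(hd2 hx2).deriv]
    exact f2neg hx

lemma f1_35 : 0 < f1 (3*π/5) := by
  have hsin35 : Real.sin (3*π/5/2) = (1 + Real.sqrt 5)/4 := by
    rw [show (3*π/5)/2 = π/2 - π/5 by ring, Real.sin_pi_div_two_sub, Real.cos_pi_div_five]
  have hpy := Real.sin_sq_add_cos_sq (3*π/5/2)
  have hcos35 : Real.cos (3*π/5) = 1 - 2 * ((1 + Real.sqrt 5)/4)^2 := by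
    have := Real.cos_two_mul (3*π/5/2); rw [show 2*(3*π/5/2) = 3*π/5 by ring] at this
    rw [hsin35] at hpy; nlinarith
  have hr : Real.sqrt 5 ^ 2 = 5 := Real.sq_sqrt (by norm_num)
  have hr2 : 2 < Real.sqrt 5 := by nlinarith [Real.sqrt_nonneg 5]
  have hval : f1 (3*π/5) = (13 * Real.sqrt 5 - 29)/8 := by
    rw [f1, hsin35, hcos35]
    have h8 : (8 : ℝ) * ((1 + Real.sqrt 5)/4)^3 = 2 + Real.sqrt 5 := by
      field_simp; linear_combination (24 + 8*Real.sqrt 5) * hr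
    rw [h8]
    have hne : (2:ℝ) + Real.sqrt 5 ≠ 0 := by positivity
    field_simp
    linear_combination (-280 - 16*Real.sqrt 5) * hr
  rw [hval]
  nlinarith [hr, hr2]

lemma Kanti {S x₁ x₂ : ℝ} (hS : S ≤ 2*π) (h0 : 0 < x₁) (h12 : x₁ < x₂) (h2 : x₂ ≤ S/2) :
    f1 x₂ + f1 (S - x₂) < f1 x₁ + f1 (S - x₁) := by
  have hπ := Real.pi_pos
  have hsub : Icc x₁ x₂ ⊆ Ioo (0:ℝ) (2*π) := fun y hy => ⟨by linarith [hy.1], by linarith [hy.2]⟩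
  obtain ⟨ξ, hξ, hξeq⟩ := exists_hasDerivAt_eq_slope f1 f2 h12
    (fun y hy => (hd2 (hsub hy)).continuousAt.continuousWithinAt)
    (fun y hy => hd2 (hsub (Ioo_subset_Icc_self hy)))
  have h12' : S - x₂ < S - x₁ := by linarith
  have hsub' : Icc (S-x₂) (S-x₁) ⊆ Ioo (0:ℝ) (2*π) := fun y hy =>
    ⟨by linarith [hy.1], by linarith [hy.2]⟩
  obtain ⟨η, hη, hηeq⟩ := exists_hasDerivAt_eq_slope f1 f2 h12'
    (fun y hy => (hd2 (hsub' hy)).continuousAt.continuousWithinAt)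
    (fun y hy => hd2 (hsub' (Ioo_subset_Icc_self hy)))
  have hξη : ξ < η := by
    have := hξ.2; have := hη.1; linarith
  have hlt : f2 ξ < f2 η :=
    f2mono (hsub (Ioo_subset_Icc_self hξ)) (hsub' (Ioo_subset_Icc_self hη)) hξη
  rw [hξeq, hηeq] at hlt
  rw [show S - x₁ - (S - x₂) = x₂ - x₁ by ring] at hlt
  have hd : (0:ℝ) < x₂ - x₁ := by linarith
  rw [div_lt_div_iff₀ hd hd] at hlt
  nlinarith [hlt, hd]

lemma Hderiv {S y : ℝ} (hy0 : 0 < y) (hyS : y < S) (hS : S ≤ 2*π) :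
    HasDerivAt (fun z => f z - f (S - z)) (f1 y + f1 (S - y)) y := by
  have h1 : HasDerivAt f (f1 y) y := hd1 ⟨hy0, by linarith⟩
  have h2 : HasDerivAt (fun z : ℝ => S - z) (0 - 1) y :=
    (hasDerivAt_const y S).sub (hasDerivAt_id y)
  have h3 : HasDerivAt (fun z => f (S - z)) (f1 (S - y) * (0 - 1)) y :=
    (hd1 (⟨by linarith, by linarith⟩ : S - y ∈ Ioo (0:ℝ) (2*π))).comp y h2
  have := h1.sub h3
  exact this.congr_deriv (by ring)

lemma keylem {S u u' : ℝ} (hS : S ≤ 2*π) (h0 : 0 < u) (huu : u < u') (hu' : u' < S/2)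
    (hfu : f u = f (S - u)) (hfu' : f u' = f (S - u')) : False := by
  have hπ := Real.pi_pos
  have hcont : ∀ p q : ℝ, 0 < p → q < S →
      ContinuousOn (fun z => f z - f (S - z)) (Icc p q) := fun p q hp hq y hy =>
    (Hderiv (lt_of_lt_of_le hp hy.1) (lt_of_le_of_lt hy.2 hq) hS).continuousAt.continuousWithinAt
  have hHu : f u - f (S - u) = 0 := sub_eq_zero_of_eq hfu
  have hHu' : f u' - f (S - u') = 0 := sub_eq_zero_of_eq hfu'
  have hH2 : f (S/2) - f (S - S/2) = 0 := by rw [show S - S/2 = S/2 by ring]; ring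
  obtain ⟨ξ₁, hξ₁, he₁⟩ := exists_hasDerivAt_eq_zero huu (hcont u u' h0 (by linarith))
    (by show f u - f (S - u) = f u' - f (S - u'); rw [hHu, hHu'])
    (fun y hy => Hderiv (by linarith [hy.1]) (by linarith [hy.2]) hS)
  obtain ⟨ξ₂, hξ₂, he₂⟩ := exists_hasDerivAt_eq_zero hu' (hcont u' (S/2) (by linarith) (by linarith))
    (by show f u' - f (S - u') = f (S/2) - f (S - S/2); rw [hHu', hH2])
    (fun y hy => Hderiv (by linarith [hy.1]) (by linarith [hy.2]) hS)
  have hK := Kanti hS (h0.trans hξ₁.1) (hξ₁.2.trans hξ₂.1) hξ₂.2.le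
  rw [he₁, he₂] at hK
  exact lt_irrefl 0 hK

lemma sumlem {θc S u : ℝ} (hθc : θc ∈ Ioo (0:ℝ) π) (hf1θc : f1 θc = 0) (hS : S ≤ 2*π)
    (h0 : 0 < u) (hu : u < S/2) (hfu : f u = f (S - u)) : 2*θc < S := by
  by_contra hc
  push_neg at hc
  have hπ := Real.pi_pos
  have hHu : f u - f (S - u) = 0 := sub_eq_zero_of_eq hfu
  have hH2 : f (S/2) - f (S - S/2) = 0 := by rw [show S - S/2 = S/2 by ring]; ring
  obtain ⟨ξ, hξ, he⟩ := exists_hasDerivAt_eq_zero hu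
    (fun y hy => (Hderiv (lt_of_lt_of_le h0 hy.1)
      (lt_of_le_of_lt hy.2 (by linarith)) hS).continuousAt.continuousWithinAt)
    (by show f u - f (S - u) = f (S/2) - f (S - S/2); rw [hHu, hH2])
    (fun y hy => Hderiv (by linarith [hy.1]) (by linarith [hy.2]) hS)
  have hK := Kanti hS (h0.trans hξ.1) hξ.2 (le_refl (S/2))
  rw [he, show S - S/2 = S/2 by ring] at hK
  have hS2θ : S/2 ≤ θc := by linarith
  have hpos : 0 ≤ f1 (S/2) := by
    rcases eq_or_lt_of_le hS2θ with h|h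
    · rw [h, hf1θc]
    · have := f1anti (⟨by linarith [hξ.1], by linarith [hθc.2]⟩ : S/2 ∈ Ioo (0:ℝ) π) hθc h
      linarith [hf1θc]
  linarith

theorem stmt11 (θc : ℝ) (hθc : θc ∈ Ioo (0:ℝ) π) (hcrit : deriv f θc = 0)
    (huniq : ∀ θ ∈ Ioo (0:ℝ) π, deriv f θ = 0 → θ = θc)
    (m : ℕ) (x : Fin m → ℝ) (hx : ∀ i, 0 < x i)
    (hsum : ∑ i, x i ≤ 2*π)
    (A₁ A₂ B₁ B₂ : Finset (Fin m))
    (hA₁ : A₁.Nonempty) (hA₂ : A₂.Nonempty) (hB₁ : B₁.Nonempty) (hB₂ : B₂.Nonempty)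
    (hAunion : A₁ ∪ A₂ = Finset.univ) (hAdisj : Disjoint A₁ A₂)
    (hBunion : B₁ ∪ B₂ = Finset.univ) (hBdisj : Disjoint B₁ B₂)
    (hBA : B₁ ⊂ A₁)
    (hfA : f (∑ i ∈ A₁, x i) = f (∑ i ∈ A₂, x i))
    (hfB : f (∑ i ∈ B₁, x i) = f (∑ i ∈ B₂, x i)) :
    (∑ i, x i > 2*θc ∧ 2*θc > 6*π/5) ∧
    ((∑ i ∈ A₁, x i = ∑ i ∈ A₂, x i) ∧ ¬(∑ i ∈ B₁, x i = ∑ i ∈ B₂, x i) ∧ ¬(∑ i ∈ A₁, x i = ∑ i ∈ B₂, x i)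
     ∨ ¬(∑ i ∈ A₁, x i = ∑ i ∈ A₂, x i) ∧ (∑ i ∈ B₁, x i = ∑ i ∈ B₂, x i) ∧ ¬(∑ i ∈ A₁, x i = ∑ i ∈ B₂, x i)
     ∨ ¬(∑ i ∈ A₁, x i = ∑ i ∈ A₂, x i) ∧ ¬(∑ i ∈ B₁, x i = ∑ i ∈ B₂, x i) ∧ (∑ i ∈ A₁, x i = ∑ i ∈ B₂, x i)) := by
  have hπ := Real.pi_pos
  set S := ∑ i, x i with hSdef
  set a := ∑ i ∈ A₁, x i with hadef
  set b := ∑ i ∈ B₁, x i with hbdef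
  have hA12 : a + ∑ i ∈ A₂, x i = S := by
    rw [hadef, ← Finset.sum_union hAdisj, hAunion, hSdef]
  have hB12 : b + ∑ i ∈ B₂, x i = S := by
    rw [hbdef, ← Finset.sum_union hBdisj, hBunion, hSdef]
  have ha2 : ∑ i ∈ A₂, x i = S - a := by linarith
  have hb2 : ∑ i ∈ B₂, x i = S - b := by linarith
  have haS : a < S := by
    have h := Finset.sum_pos (fun i _ => hx i) hA₂
    rw [ha2] at h; linarith
  have hb0 : 0 < b := Finset.sum_pos (fun i _ => hx i) hB₁
  have hba : b < a := by
    obtain ⟨i, hiA, hiB⟩ := Finset.exists_of_ssubset hBA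
    exact Finset.sum_lt_sum_of_subset hBA.subset hiA hiB (hx i) (fun j _ _ => (hx j).le)
  have hbS : b < S := hba.trans haS
  rw [ha2] at hfA
  rw [hb2] at hfB
  rw [ha2, hb2]
  -- θc facts
  have hθc2 : θc ∈ Ioo (0:ℝ) (2*π) := ⟨hθc.1, by linarith [hθc.2]⟩
  have hf1θc : f1 θc = 0 := by rw [← (hd1 hθc2).deriv]; exact hcrit
  have hθc35 : 3*π/5 < θc := by
    by_contra h
    push_neg at h
    have h35 : (3*π/5) ∈ Ioo (0:ℝ) π := ⟨by linarith, by linarith⟩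
    rcases eq_or_lt_of_le h with heq|hlt
    · rw [heq] at hf1θc
      exact absurd hf1θc (ne_of_gt f1_35)
    · have := f1anti hθc h35 hlt
      linarith [f1_35]
  -- pair normalization
  have norm : ∀ p : ℝ, 0 < p → p < S → p ≠ S - p → f p = f (S - p) →
      ∃ u, (0 < u ∧ u < S/2 ∧ f u = f (S - u)) ∧ (u = p ∨ u = S - p) := by
    intro p h0 hpS hne hf
    rcases lt_or_gt_of_ne hne with h|h
    · exact ⟨p, ⟨h0, by linarith, hf⟩, Or.inl rfl⟩
    · refine ⟨S - p, ⟨by linarith, by linarith, ?_⟩, Or.inr rfl⟩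
      rw [show S - (S - p) = p by ring]
      exact hf.symm
  have hex1 : a = S - a → b = S - b → False := by intro h1 h2; linarith
  have hex2 : a = S - a → a = S - b → False := by intro h1 h3; linarith
  have hex3 : b = S - b → a = S - b → False := by intro h2 h3; linarith
  have part1 : 2*θc < S := by
    by_cases h1 : a = S - a
    · have h2 : b ≠ S - b := fun h => hex1 h1 h
      obtain ⟨u, ⟨hu0, huS, huf⟩, _⟩ := norm b hb0 hbS h2 hfB
      exact sumlem hθc hf1θc hsum hu0 huS huf
    · obtain ⟨u, ⟨hu0, huS, huf⟩, _⟩ := norm a (hb0.trans hba) haS h1 hfA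
      exact sumlem hθc hf1θc hsum hu0 huS huf
  refine ⟨⟨part1, by linarith⟩, ?_⟩
  by_cases h1 : a = S - a
  · exact Or.inl ⟨h1, fun h => hex1 h1 h, fun h => hex2 h1 h⟩
  by_cases h2 : b = S - b
  · exact Or.inr (Or.inl ⟨h1, h2, fun h => hex3 h2 h⟩)
  by_cases h3 : a = S - b
  · exact Or.inr (Or.inr ⟨h1, h2, h3⟩)
  exfalso
  obtain ⟨u, ⟨hu0, huS, huf⟩, hup⟩ := norm a (hb0.trans hba) haS h1 hfA
  obtain ⟨v, ⟨hv0, hvS, hvf⟩, hvp⟩ := norm b hb0 hbS h2 hfB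
  have huv : u ≠ v := by
    rcases hup with rfl|rfl <;> rcases hvp with rfl|rfl
    · exact fun h => (ne_of_gt hba) h
    · exact fun h => h3 h
    · intro h; apply h3; linarith
    · intro h; have hab : a = b := by linarith
      exact (ne_of_gt hba) hab
  rcases lt_or_gt_of_ne huv with h|h
  · exact keylem hsum hu0 h hvS huf hvf
  · exact keylem hsum hv0 h huS hvf huf
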